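/- Let R_{1212}, R_{1313}, R_{2323}, R_{1213}, R_{1223}, R_{1323} ∈ ℝ with R_{1223} = R_{1323} = 0, R_{1212} ≠ 0 and R_{2323} ≠ 0, and set S := (R_{1212}·R_{1313} − R_{1213}²)/R_{2323}. Then a solution of the Gauss equation in codimension 1 exists if and only if S > 0; moreover, every solution h_{ij} satisfies h_{12} = h_{13} = 0, h_{11}² = S, h_{11}·h_{22} = R_{1212}, h_{11}·h_{33} = R_{1313}, and h_{11}·h_{23} = R_{1213} (so the solution is unique up to overall sign). -/

import Mathlib

/-- A solution of the Gauss equation in codimension 1 exists for the given curvature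
components. (The family `h i j` is encoded by the six entries `h11, h12, h13, h22,
h23, h33`, symmetry `h i j = h j i` being automatic.) -/
def GaussSolvable (R1212 R1313 R2323 R1213 R1223 R1323 : ℝ) : Prop :=
  ∃ h11 h12 h13 h22 h23 h33 : ℝ,
    h11 * h22 - h12 ^ 2 = R1212 ∧
    h11 * h33 - h13 ^ 2 = R1313 ∧
    h22 * h33 - h23 ^ 2 = R2323 ∧
    h11 * h23 - h13 * h12 = R1213 ∧
    h12 * h23 - h13 * h22 = R1223 ∧
    h12 * h33 - h13 * h23 = R1323

lemma gauss_unique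
    (R1212 R1313 R2323 R1213 R1223 R1323 : ℝ)
    (h0 : R1223 = 0) (h0' : R1323 = 0)
    (hne : R1212 ≠ 0) (hne' : R2323 ≠ 0)
    (h11 h12 h13 h22 h23 h33 : ℝ)
    (e1 : h11 * h22 - h12 ^ 2 = R1212)
    (e2 : h11 * h33 - h13 ^ 2 = R1313)
    (e3 : h22 * h33 - h23 ^ 2 = R2323)
    (e4 : h11 * h23 - h13 * h12 = R1213)
    (e5 : h12 * h23 - h13 * h22 = R1223)
    (e6 : h12 * h33 - h13 * h23 = R1323) :
    h12 = 0 ∧ h13 = 0 ∧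
      h11 ^ 2 = (R1212 * R1313 - R1213 ^ 2) / R2323 ∧
      h11 * h22 = R1212 ∧ h11 * h33 = R1313 ∧ h11 * h23 = R1213 := by
  subst h0 h0'
  have hc12 : h12 * R2323 = 0 := by linear_combination h22 * e6 - h23 * e5 - h12 * e3
  have hc13 : h13 * R2323 = 0 := by linear_combination h23 * e6 - h33 * e5 - h13 * e3
  have h12z : h12 = 0 := by
    rcases mul_eq_zero.mp hc12 with h | h
    · exact h
    · exact absurd h hne'
  have h13z : h13 = 0 := by
    rcases mul_eq_zero.mp hc13 with h | h
    · exact h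
    · exact absurd h hne'
  subst h12z h13z
  refine ⟨rfl, rfl, ?_, by linarith, by linarith, by linarith⟩
  rw [eq_div_iff hne', ← e1, ← e2, ← e3, ← e4]
  ring

theorem gauss_equation_solvable_iff_S_pos
    (R1212 R1313 R2323 R1213 R1223 R1323 : ℝ)
    (h0 : R1223 = 0) (h0' : R1323 = 0)
    (hne : R1212 ≠ 0) (hne' : R2323 ≠ 0) :
    (GaussSolvable R1212 R1313 R2323 R1213 R1223 R1323 ↔
      (R1212 * R1313 - R1213 ^ 2) / R2323 > 0) ∧
    (∀ h11 h12 h13 h22 h23 h33 : ℝ,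
      h11 * h22 - h12 ^ 2 = R1212 →
      h11 * h33 - h13 ^ 2 = R1313 →
      h22 * h33 - h23 ^ 2 = R2323 →
      h11 * h23 - h13 * h12 = R1213 →
      h12 * h23 - h13 * h22 = R1223 →
      h12 * h33 - h13 * h23 = R1323 →
      h12 = 0 ∧ h13 = 0 ∧
      h11 ^ 2 = (R1212 * R1313 - R1213 ^ 2) / R2323 ∧
      h11 * h22 = R1212 ∧ h11 * h33 = R1313 ∧ h11 * h23 = R1213) := by
  constructor
  · constructor
    · rintro ⟨h11, h12, h13, h22, h23, h33, e1, e2, e3, e4, e5, e6⟩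
      obtain ⟨-, -, hsq, he1, -, -⟩ :=
        gauss_unique R1212 R1313 R2323 R1213 R1223 R1323 h0 h0' hne hne'
          h11 h12 h13 h22 h23 h33 e1 e2 e3 e4 e5 e6
      have h11ne : h11 ≠ 0 := by
        intro h
        apply hne
        rw [← he1, h, zero_mul]
      rw [← hsq]
      positivity
    · intro hS
      set S := (R1212 * R1313 - R1213 ^ 2) / R2323 with hSdef
      have hs : Real.sqrt S ≠ 0 := by positivity
      refine ⟨Real.sqrt S, 0, 0, R1212 / Real.sqrt S, R1213 / Real.sqrt S,
        R1313 / Real.sqrt S, ?_, ?_, ?_, ?_, by ring_nf; simp [h0], by ring_nf; simp [h0']⟩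
      · field_simp; ring
      · field_simp; ring
      · have hsq : Real.sqrt S ^ 2 = S := Real.sq_sqrt hS.le
        have hSR : S * R2323 = R1212 * R1313 - R1213 ^ 2 := by
          rw [hSdef, div_mul_cancel₀ _ hne']
        field_simp
        linear_combination (R1213^2 - R1212*R1313) * (mul_inv_cancel₀ hne') - R2323 * hsq
      · field_simp; ring
  · intro h11 h12 h13 h22 h23 h33 e1 e2 e3 e4 e5 e6
    exact gauss_unique R1212 R1313 R2323 R1213 R1223 R1323 h0 h0' hne hne'
      h11 h12 h13 h22 h23 h33 e1 e2 e3 e4 e5 e6
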